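/- Let X be a real vector space and let ‖·‖₁ and ‖·‖₂ be two equivalent norms on X, each of which makes X a locally uniformly convex Banach space. Then the norm ‖x‖ := max{‖x‖₁, ‖x‖₂} makes X a locally uniformly convex Banach space. -/
import Mathlib


open Filter Topology Set

section Defs

variable {X : Type*} [AddCommGroup X] [Module ℝ X]

/-- `N` is a norm on the real vector space `X`. -/
def IsNorm (N : X → ℝ) : Prop :=
  (∀ x : X, N x = 0 ↔ x = 0) ∧
  (∀ (a : ℝ) (x : X), N (a • x) = |a| * N x) ∧
  (∀ x y : X, N (x + y) ≤ N x + N y)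

/-- `N` is locally uniformly convex. -/
def IsLUR (N : X → ℝ) : Prop :=
  ∀ x : X, N x = 1 → ∀ y : ℕ → X, (∀ n, N (y n) = 1) →
    Filter.Tendsto (fun n => N ((2 : ℝ)⁻¹ • (x + y n))) Filter.atTop (nhds 1) →
    Filter.Tendsto (fun n => N (x - y n)) Filter.atTop (nhds 0)

/-- `R` is a nearest point map onto `K` with respect to the norm `N`. -/
def IsNearestPointMap (N : X → ℝ) (K : Set X) (R : X → X) : Prop :=
  ∀ x : X, R x ∈ K ∧ N (x - R x) = sInf ((fun c => N (x - c)) '' K)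

/-- `R` is continuous with respect to the norm `N`. -/
def NContinuous (N : X → ℝ) (R : X → X) : Prop :=
  ∀ x : X, ∀ ε > (0 : ℝ), ∃ δ > (0 : ℝ), ∀ y : X, N (x - y) < δ → N (R x - R y) < ε

/-- `R` is uniformly continuous with respect to the norm `N`. -/
def NUniformContinuous (N : X → ℝ) (R : X → X) : Prop :=
  ∀ ε > (0 : ℝ), ∃ δ > (0 : ℝ), ∀ x y : X, N (x - y) < δ → N (R x - R y) < ε

end Defs

section Defs2

variable {X : Type*} [AddCommGroup X] [Module ℝ X]

/-- `X` is complete with respect to the norm `N`: every `N`-Cauchy sequence `N`-converges. -/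
def NComplete (N : X → ℝ) : Prop :=
  ∀ u : ℕ → X,
    (∀ ε > (0 : ℝ), ∃ M : ℕ, ∀ m ≥ M, ∀ n ≥ M, N (u m - u n) < ε) →
    ∃ x : X, Filter.Tendsto (fun n => N (u n - x)) Filter.atTop (nhds 0)

end Defs2

section Aux

variable {X : Type*} [AddCommGroup X] [Module ℝ X]

lemma mynn (N : X → ℝ) (hN : IsNorm N) : ∀ x, 0 ≤ N x := by
  intro x
  obtain ⟨h0, hs, ht⟩ := hN
  have hneg : N (-x) = N x := by
    have := hs (-1) x; simpa using this
  have h := ht x (-x)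
  simp only [add_neg_cancel, (h0 0).mpr rfl, hneg] at h
  linarith

lemma myrev (N : X → ℝ) (hN : IsNorm N) : ∀ u v : X, N u ≤ N v + N (u - v) := by
  intro u v
  have h := hN.2.2 v (u - v)
  simpa using h

lemma myneg (N : X → ℝ) (hN : IsNorm N) : ∀ x : X, N (-x) = N x := by
  intro x; have := hN.2.1 (-1) x; simpa using this

/-- LUR with the sequence only required to be in the unit ball. -/
lemma lur_aux (M : X → ℝ) (hM : IsNorm M) (hL : IsLUR M) (x : X) (y : ℕ → X)
    (hx : M x = 1) (hy : ∀ n, M (y n) ≤ 1)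
    (hmid : Tendsto (fun n => M ((2:ℝ)⁻¹ • (x + y n))) atTop (nhds 1)) :
    Tendsto (fun n => M (x - y n)) atTop (nhds 0) := by
  classical
  obtain ⟨h0, hs, ht⟩ := hM
  have hnn := mynn M ⟨h0, hs, ht⟩
  have hmideq : ∀ z : X, M ((2:ℝ)⁻¹ • z) = 2⁻¹ * M z := by
    intro z; rw [hs]; norm_num
  -- M (y n) → 1
  have hylim : Tendsto (fun n => M (y n)) atTop (nhds 1) := by
    apply tendsto_of_tendsto_of_tendsto_of_le_of_le
      (g := fun n => 2 * M ((2:ℝ)⁻¹ • (x + y n)) - 1) (h := fun _ => (1:ℝ))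
    · have h := (hmid.const_mul 2).sub_const 1
      convert h using 2
      norm_num
    · exact tendsto_const_nhds
    · intro n
      have h1 := ht x (y n)
      have h2 := hmideq (x + y n)
      nlinarith
    · exact hy
  have hev : ∀ᶠ n in atTop, (1:ℝ)/2 < M (y n) :=
    hylim.eventually (eventually_gt_nhds (by norm_num))
  set z : ℕ → X := fun n => if (1:ℝ)/2 < M (y n) then (M (y n))⁻¹ • y n else x with hzdef
  have hz1 : ∀ n, M (z n) = 1 := by
    intro n
    by_cases h : (1:ℝ)/2 < M (y n)
    · have hpos : 0 < M (y n) := by linarith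
      simp only [hzdef, if_pos h, hs]
      rw [abs_of_pos (inv_pos.mpr hpos)]
      field_simp
    · simp only [hzdef, if_neg h]; exact hx
  have hzy : Tendsto (fun n => M (z n - y n)) atTop (nhds 0) := by
    have habs : Tendsto (fun n => |1 - M (y n)|) atTop (nhds 0) := by
      have := (tendsto_const_nhds (x := (1:ℝ)) (f := atTop)).sub hylim
      norm_num at this
      simpa using this.abs
    apply habs.congr'
    filter_upwards [hev] with n h
    have hpos : 0 < M (y n) := by linarith
    simp only [hzdef, if_pos h]
    have heq : (M (y n))⁻¹ • y n - y n = ((M (y n))⁻¹ - 1) • y n := by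
      rw [sub_smul, one_smul]
    rw [heq, hs]
    have habs2 : |(M (y n))⁻¹ - 1| * M (y n) = |((M (y n))⁻¹ - 1) * M (y n)| := by
      rw [abs_mul, abs_of_pos hpos]
    rw [habs2, sub_mul, inv_mul_cancel₀ hpos.ne', one_mul]
  have hmid' : Tendsto (fun n => M ((2:ℝ)⁻¹ • (x + z n))) atTop (nhds 1) := by
    have hdiff : ∀ n, M ((2:ℝ)⁻¹ • (x + z n)) ≤ M ((2:ℝ)⁻¹ • (x + y n)) + 2⁻¹ * M (z n - y n) ∧
        M ((2:ℝ)⁻¹ • (x + y n)) ≤ M ((2:ℝ)⁻¹ • (x + z n)) + 2⁻¹ * M (z n - y n) := by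
      intro n
      have h1 := myrev M ⟨h0, hs, ht⟩ ((2:ℝ)⁻¹ • (x + z n)) ((2:ℝ)⁻¹ • (x + y n))
      have h2 := myrev M ⟨h0, hs, ht⟩ ((2:ℝ)⁻¹ • (x + y n)) ((2:ℝ)⁻¹ • (x + z n))
      have e1 : (2:ℝ)⁻¹ • (x + z n) - (2:ℝ)⁻¹ • (x + y n) = (2:ℝ)⁻¹ • (z n - y n) := by
        rw [← smul_sub]; congr 1; abel
      have e2 : (2:ℝ)⁻¹ • (x + y n) - (2:ℝ)⁻¹ • (x + z n) = (2:ℝ)⁻¹ • (y n - z n) := by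
        rw [← smul_sub]; congr 1; abel
      have e3 : M ((2:ℝ)⁻¹ • (y n - z n)) = 2⁻¹ * M (z n - y n) := by
        rw [hmideq]
        congr 1
        have := myneg M ⟨h0, hs, ht⟩ (z n - y n)
        simpa [neg_sub] using this
      rw [e1, hmideq (z n - y n)] at h1
      rw [e2, e3] at h2
      exact ⟨h1, h2⟩
    apply tendsto_of_tendsto_of_tendsto_of_le_of_le
      (g := fun n => M ((2:ℝ)⁻¹ • (x + y n)) - 2⁻¹ * M (z n - y n))
      (h := fun n => M ((2:ℝ)⁻¹ • (x + y n)) + 2⁻¹ * M (z n - y n))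
    · have h := hmid.sub (hzy.const_mul 2⁻¹)
      convert h using 2
      norm_num
    · have h := hmid.add (hzy.const_mul 2⁻¹)
      convert h using 2
      norm_num
    · intro n; linarith [(hdiff n).2]
    · intro n; linarith [(hdiff n).1]
  have hxz := hL x hx z hz1 hmid'
  apply squeeze_zero (fun n => hnn _) (g := fun n => M (x - z n) + M (z n - y n))
  · intro n
    have h := ht (x - z n) (z n - y n)
    have e : x - z n + (z n - y n) = x - y n := by abel
    rw [e] at h; exact h
  · simpa using hxz.add hzy

/-- Main one-norm case lemma. -/
lemma case_aux (M Nm : X → ℝ) (hM : IsNorm M) (hL : IsLUR M)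
    (c : ℝ) (hle : ∀ z, M z ≤ Nm z) (hge : ∀ z, Nm z ≤ c * M z)
    (x : X) (y : ℕ → X) (hx : Nm x = 1) (hy : ∀ n, Nm (y n) = 1)
    (hmid : Tendsto (fun n => M ((2:ℝ)⁻¹ • (x + y n))) atTop (nhds 1)) :
    Tendsto (fun n => Nm (x - y n)) atTop (nhds 0) := by
  have hnn := mynn M hM
  have hMx : M x = 1 := by
    have h1 : M x ≤ 1 := hx ▸ hle x
    have h2 : (1:ℝ) ≤ M x := by
      have hbd : ∀ n, 2 * M ((2:ℝ)⁻¹ • (x + y n)) - 1 ≤ M x := by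
        intro n
        have h3 := hM.2.2 x (y n)
        have h4 : M ((2:ℝ)⁻¹ • (x + y n)) = 2⁻¹ * M (x + y n) := by
          rw [hM.2.1]; norm_num
        have h5 : M (y n) ≤ 1 := (hy n) ▸ hle (y n)
        nlinarith
      have hlim' : Tendsto (fun n => 2 * M ((2:ℝ)⁻¹ • (x + y n)) - 1) atTop (nhds 1) := by
        have h := (hmid.const_mul 2).sub_const 1
        convert h using 2
        norm_num
      exact le_of_tendsto' hlim' hbd
    linarith
  have hM0 := lur_aux M hM hL x y hMx (fun n => (hy n) ▸ hle (y n)) hmid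
  apply squeeze_zero (fun n => le_trans (hnn _) (hle _)) (g := fun n => c * M (x - y n))
  · intro n; exact hge _
  · simpa using hM0.const_mul c

end Aux

theorem statement15 {X : Type*} [AddCommGroup X] [Module ℝ X] (N₁ N₂ : X → ℝ)
    (h₁ : IsNorm N₁) (h₂ : IsNorm N₂)
    (a b : ℝ) (ha : 0 < a) (hb : 0 < b)
    (heq : ∀ x : X, a * N₁ x ≤ N₂ x ∧ N₂ x ≤ b * N₁ x)
    (hc₁ : NComplete N₁) (hc₂ : NComplete N₂)
    (hl₁ : IsLUR N₁) (hl₂ : IsLUR N₂) :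
    IsNorm (fun x : X => max (N₁ x) (N₂ x)) ∧
    NComplete (fun x : X => max (N₁ x) (N₂ x)) ∧
    IsLUR (fun x : X => max (N₁ x) (N₂ x)) := by
  have hnn1 := mynn N₁ h₁
  have hnn2 := mynn N₂ h₂
  have hgecb : ∀ z, max (N₁ z) (N₂ z) ≤ (1 + b) * N₁ z := by
    intro z
    apply max_le
    · nlinarith [hnn1 z]
    · nlinarith [(heq z).2, hnn1 z]
  have hgeca : ∀ z, max (N₁ z) (N₂ z) ≤ (1 + a⁻¹) * N₂ z := by
    intro z
    have h1 : N₁ z ≤ a⁻¹ * N₂ z := by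
      rw [← div_eq_inv_mul, le_div_iff₀ ha]
      linarith [(heq z).1]
    have h2 : 0 ≤ a⁻¹ * N₂ z := mul_nonneg (le_of_lt (inv_pos.mpr ha)) (hnn2 z)
    apply max_le
    · nlinarith [hnn2 z]
    · nlinarith [hnn2 z]
  refine ⟨⟨?_, ?_, ?_⟩, ?_, ?_⟩
  · intro x
    constructor
    · intro h
      apply (h₁.1 x).mp
      have h1 : N₁ x ≤ max (N₁ x) (N₂ x) := le_max_left _ _
      linarith [hnn1 x]
    · intro h
      subst h
      show max (N₁ 0) (N₂ 0) = 0
      rw [(h₁.1 0).mpr rfl, (h₂.1 0).mpr rfl]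
      simp
  · intro c x
    simp only [h₁.2.1, h₂.2.1]
    exact (mul_max_of_nonneg _ _ (abs_nonneg c)).symm
  · intro x y
    apply max_le
    · exact le_trans (h₁.2.2 x y) (add_le_add (le_max_left _ _) (le_max_left _ _))
    · exact le_trans (h₂.2.2 x y) (add_le_add (le_max_right _ _) (le_max_right _ _))
  · -- completeness
    intro u hu
    have hu1 : ∀ ε > (0:ℝ), ∃ M : ℕ, ∀ m ≥ M, ∀ n ≥ M, N₁ (u m - u n) < ε := by
      intro ε hε
      obtain ⟨M, hM⟩ := hu ε hε
      exact ⟨M, fun m hm n hn => lt_of_le_of_lt (le_max_left _ _) (hM m hm n hn)⟩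
    obtain ⟨x, hx⟩ := hc₁ u hu1
    refine ⟨x, ?_⟩
    apply squeeze_zero (fun n => le_trans (hnn1 _) (le_max_left _ _))
      (g := fun n => (1 + b) * N₁ (u n - x))
    · intro n; exact hgecb _
    · simpa using hx.const_mul (1 + b)
  · -- LUR
    intro x hx y hy hmid
    simp only at hx hy hmid ⊢
    apply tendsto_of_subseq_tendsto
    intro ns hns
    have hor : (∃ᶠ k in atTop, N₂ ((2:ℝ)⁻¹ • (x + y (ns k))) ≤ N₁ ((2:ℝ)⁻¹ • (x + y (ns k)))) ∨
        (∃ᶠ k in atTop, ¬ N₂ ((2:ℝ)⁻¹ • (x + y (ns k))) ≤ N₁ ((2:ℝ)⁻¹ • (x + y (ns k)))) := by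
      rw [← frequently_or_distrib]
      exact Frequently.of_forall (fun k => em _)
    rcases hor with hf | hf
    · obtain ⟨φ, hφmono, hφ⟩ := extraction_of_frequently_atTop hf
      refine ⟨φ, ?_⟩
      have hts : Tendsto (fun k => ns (φ k)) atTop atTop :=
        hns.comp hφmono.tendsto_atTop
      have hmid1 : Tendsto (fun k => N₁ ((2:ℝ)⁻¹ • (x + y (ns (φ k))))) atTop (nhds 1) := by
        apply (hmid.comp hts).congr
        intro k
        simp only [Function.comp_apply]
        exact max_eq_left (hφ k)
      exact case_aux N₁ (fun z => max (N₁ z) (N₂ z)) h₁ hl₁ (1 + b)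
        (fun z => le_max_left _ _) hgecb x (fun k => y (ns (φ k))) hx
        (fun k => hy (ns (φ k))) hmid1
    · obtain ⟨φ, hφmono, hφ⟩ := extraction_of_frequently_atTop hf
      refine ⟨φ, ?_⟩
      have hts : Tendsto (fun k => ns (φ k)) atTop atTop :=
        hns.comp hφmono.tendsto_atTop
      have hmid2 : Tendsto (fun k => N₂ ((2:ℝ)⁻¹ • (x + y (ns (φ k))))) atTop (nhds 1) := by
        apply (hmid.comp hts).congr
        intro k
        simp only [Function.comp_apply]
        exact max_eq_right (le_of_not_ge (hφ k))
      exact case_aux N₂ (fun z => max (N₁ z) (N₂ z)) h₂ hl₂ (1 + a⁻¹)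
        (fun z => le_max_right _ _) hgeca x (fun k => y (ns (φ k))) hx
        (fun k => hy (ns (φ k))) hmid2
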